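/- Laplacian bound on f_s(L_q): Let f(x) = exp(−2|x|) be the Laplacian, extended multiplicatively to ℝ². For any s > 0 and any positive integer q, it holds that 1/f_s(L_q) > tanh(2/s)·E(q/s), where L_q := ∪_{z∈ℤ}((z,z) + qℤ²) and E(x) := (coth(x) + 4x·e^{2x}/(e^{2x} − 1)²)^{-1}. -/

import Mathlib

noncomputable section

/-- The Laplacian function `f(x) = exp(-2|x|)`. -/
def lap (x : ℝ) : ℝ := Real.exp (-2 * |x|)

/-- The lattice `L_q = ∪_{z∈ℤ} ((z,z) + qℤ²) ⊂ ℝ²`. -/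
def LqSet (q : ℕ) : Set (ℝ × ℝ) :=
  {v | ∃ z w₁ w₂ : ℤ, v.1 = z + q * w₁ ∧ v.2 = z + q * w₂}

/-- `f_s(L_q)`: the sum over `L_q` of the multiplicative extension of `f` to `ℝ²`,
scaled by `s` (i.e. `f_s(x) = f(x/s)`). -/
def fsLq (f : ℝ → ℝ) (s : ℝ) (q : ℕ) : ℝ :=
  ∑' v : LqSet q, f ((v : ℝ × ℝ).1 / s) * f ((v : ℝ × ℝ).2 / s)

/-- `coth x = (e^x + e^{-x})/(e^x - e^{-x})`. -/
def coth' (x : ℝ) : ℝ := (Real.exp x + Real.exp (-x)) / (Real.exp x - Real.exp (-x))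

/-- The "fudge factor" `E(x) = (coth(x) + 4x·e^{2x}/(e^{2x} − 1)²)⁻¹`. -/
def El (x : ℝ) : ℝ :=
  (coth' x + 4 * x * Real.exp (2 * x) / (Real.exp (2 * x) - 1) ^ 2)⁻¹

/-! ### Auxiliary lemmas -/

theorem aux_sinh_lt (t : ℝ) (ht : 0 < t) : Real.sinh t < t * Real.cosh t := by
  have mono : StrictMonoOn (fun x : ℝ => x * Real.cosh x - Real.sinh x) (Set.Ici 0) := by
    apply strictMonoOn_of_deriv_pos (convex_Ici 0)
    · exact ((continuous_id.mul Real.continuous_cosh).sub Real.continuous_sinh).continuousOn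
    · intro x hx
      rw [interior_Ici] at hx
      have hd : HasDerivAt (fun x : ℝ => x * Real.cosh x - Real.sinh x)
          ((1 * Real.cosh x + x * Real.sinh x) - Real.cosh x) x :=
        ((hasDerivAt_id x).mul (Real.hasDerivAt_cosh x)).sub (Real.hasDerivAt_sinh x)
      rw [hd.deriv]
      have h1 := Real.sinh_pos_iff.mpr hx
      have hx2 : 0 < x := hx
      nlinarith [mul_pos hx2 h1]
  have h0 : (0:ℝ) ∈ Set.Ici (0:ℝ) := Set.self_mem_Ici
  have ht' : t ∈ Set.Ici (0:ℝ) := Set.mem_Ici.mpr ht.le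
  have := mono h0 ht' ht
  simp at this
  linarith

theorem aux_hasSum_int (a : ℝ) (ha0 : 0 < a) (ha1 : a < 1) (q z : ℕ) (hz : z < q) :
    HasSum (fun w : ℤ => a ^ ((z : ℤ) + (q : ℤ) * w).natAbs)
      ((a ^ z + a ^ (q - z)) * (1 - a ^ q)⁻¹) := by
  have hA1 : a ^ q < 1 := pow_lt_one₀ ha0.le ha1 (by omega)
  have hgeo := hasSum_geometric_of_lt_one (pow_nonneg ha0.le q) hA1
  have h1 : HasSum (fun n : ℕ => a ^ (z + q * n)) (a ^ z * (1 - a ^ q)⁻¹) := by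
    have h := hgeo.mul_left (a ^ z)
    have e : (fun n : ℕ => a ^ (z + q * n)) = fun n : ℕ => a ^ z * (a ^ q) ^ n := by
      funext n; rw [pow_add, pow_mul]
    rw [e]; exact h
  have h2 : HasSum (fun n : ℕ => a ^ ((q - z) + q * n)) (a ^ (q - z) * (1 - a ^ q)⁻¹) := by
    have h := hgeo.mul_left (a ^ (q - z))
    have e : (fun n : ℕ => a ^ ((q - z) + q * n)) = fun n : ℕ => a ^ (q - z) * (a ^ q) ^ n := by
      funext n; rw [pow_add, pow_mul]
    rw [e]; exact h
  have e₁ : ∀ n : ℕ, ((z : ℤ) + (q : ℤ) * (n : ℤ)).natAbs = z + q * n := by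
    intro n
    have h : (z : ℤ) + (q : ℤ) * (n : ℤ) = ((z + q * n : ℕ) : ℤ) := by push_cast; ring
    rw [h, Int.natAbs_natCast]
  have e₂ : ∀ n : ℕ, ((z : ℤ) + (q : ℤ) * (-((n : ℤ) + 1))).natAbs = (q - z) + q * n := by
    intro n
    have h : (z : ℤ) + (q : ℤ) * (-((n : ℤ) + 1)) = -(((q - z) + q * n : ℕ) : ℤ) := by
      push_cast [Nat.cast_sub hz.le]; ring
    rw [h, Int.natAbs_neg, Int.natAbs_natCast]
  have H1 : HasSum (fun n : ℕ => a ^ ((z : ℤ) + (q : ℤ) * ((n : ℕ) : ℤ)).natAbs)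
      (a ^ z * (1 - a ^ q)⁻¹) := by simpa only [e₁] using h1
  have H2 : HasSum (fun n : ℕ => a ^ ((z : ℤ) + (q : ℤ) * (-((n : ℤ) + 1))).natAbs)
      (a ^ (q - z) * (1 - a ^ q)⁻¹) := by simpa only [e₂] using h2
  have H := HasSum.of_nat_of_neg_add_one
    (f := fun w : ℤ => a ^ ((z : ℤ) + (q : ℤ) * w).natAbs) H1 H2
  have he : (a ^ z + a ^ (q - z)) * (1 - a ^ q)⁻¹
      = a ^ z * (1 - a ^ q)⁻¹ + a ^ (q - z) * (1 - a ^ q)⁻¹ := by ring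
  rw [he]
  exact H

theorem aux_lap_int (s : ℝ) (hs : 0 < s) (m : ℤ) :
    lap ((m : ℝ) / s) = Real.exp (-(2 / s)) ^ m.natAbs := by
  rw [lap, ← Real.exp_nat_mul]
  congr 1
  rw [abs_div, abs_of_pos hs]
  have : |(m : ℝ)| = (m.natAbs : ℝ) := by
    rw [← Int.cast_abs, Int.abs_eq_natAbs, Int.cast_natCast]
  rw [this]; ring

def latmap (q : ℕ) (p : Fin q × ℤ × ℤ) : ℝ × ℝ :=
  (((p.1 : ℤ) : ℝ) + q * p.2.1, ((p.1 : ℤ) : ℝ) + q * p.2.2)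

theorem latmap_mem (q : ℕ) (p : Fin q × ℤ × ℤ) : latmap q p ∈ LqSet q :=
  ⟨p.1, p.2.1, p.2.2, by simp [latmap], by simp [latmap]⟩

theorem latmap_bij (q : ℕ) (hq : 0 < q) :
    Function.Bijective (fun p => (⟨latmap q p, latmap_mem q p⟩ : LqSet q)) := by
  constructor
  · rintro ⟨z, w₁, w₂⟩ ⟨z', w₁', w₂'⟩ h
    rw [Subtype.ext_iff, Prod.ext_iff] at h
    obtain ⟨h1, h2⟩ := h
    simp only [latmap] at h1 h2
    have h1' : (z : ℤ) + q * w₁ = (z' : ℤ) + q * w₁' := by exact_mod_cast h1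
    have h2' : (z : ℤ) + q * w₂ = (z' : ℤ) + q * w₂' := by exact_mod_cast h2
    have hzb1 : (z : ℤ) < q := by exact_mod_cast z.isLt
    have hzb2 : (z' : ℤ) < q := by exact_mod_cast z'.isLt
    have hz0 : (0 : ℤ) ≤ z := Int.ofNat_nonneg _
    have hz0' : (0 : ℤ) ≤ z' := Int.ofNat_nonneg _
    have habs : |(z : ℤ) - z'| < q := by
      rw [abs_lt]; omega
    have hz : (z : ℤ) - z' = q * (w₁' - w₁) := by linarith
    have hw : w₁' - w₁ = 0 := by
      by_contra hne
      have h1le : 1 ≤ |w₁' - w₁| := Int.one_le_abs (by omega)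
      rw [hz, abs_mul, abs_of_nonneg (by positivity : (0:ℤ) ≤ (q:ℤ))] at habs
      nlinarith
    have hzz : (z : ℤ) = z' := by rw [hw, mul_zero] at hz; omega
    have hw1 : w₁ = w₁' := by omega
    have hw2 : w₂ = w₂' := by
      have : (q : ℤ) * w₂ = q * w₂' := by omega
      have hq' : (q : ℤ) ≠ 0 := by exact_mod_cast hq.ne'
      exact mul_left_cancel₀ hq' this
    have : z = z' := Fin.ext (by exact_mod_cast hzz)
    simp [this, hw1, hw2]
  · rintro ⟨v, z, w₁, w₂, hv1, hv2⟩
    have hq' : (q : ℤ) ≠ 0 := by exact_mod_cast hq.ne'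
    set r := z % q with hr
    set d := z / q with hd
    have hr0 : 0 ≤ r := Int.emod_nonneg z hq'
    have hrq : r < q := Int.emod_lt_of_pos z (by exact_mod_cast hq)
    have hzdr : (q : ℤ) * d + r = z := Int.mul_ediv_add_emod z q
    refine ⟨(⟨r.toNat, by omega⟩, d + w₁, d + w₂), ?_⟩
    rw [Subtype.ext_iff]
    apply Prod.ext
    · simp only [latmap, hv1]
      push_cast [Int.toNat_of_nonneg hr0]
      have : (z : ℝ) = q * d + r := by exact_mod_cast hzdr.symm
      rw [this]; ring
    · simp only [latmap, hv2]
      push_cast [Int.toNat_of_nonneg hr0]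
      have : (z : ℝ) = q * d + r := by exact_mod_cast hzdr.symm
      rw [this]; ring

theorem aux_sum_sq (a : ℝ) (q : ℕ) (hq : 0 < q) :
    ∑ z : Fin q, ((a ^ (z : ℕ) + a ^ (q - (z : ℕ))) * (1 - a ^ q)⁻¹) ^ 2
      = ((1 + a ^ 2) * (∑ i ∈ Finset.range q, (a ^ 2) ^ i) + 2 * q * a ^ q)
        * ((1 - a ^ q)⁻¹) ^ 2 := by
  have h1 : ∀ z : Fin q, ((a ^ (z : ℕ) + a ^ (q - (z : ℕ))) * (1 - a ^ q)⁻¹) ^ 2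
      = (a ^ (z : ℕ) + a ^ (q - (z : ℕ))) ^ 2 * ((1 - a ^ q)⁻¹) ^ 2 := fun z => mul_pow _ _ _
  rw [Finset.sum_congr rfl (fun z _ => h1 z), ← Finset.sum_mul]
  congr 1
  rw [Fin.sum_univ_eq_sum_range (fun i => (a ^ i + a ^ (q - i)) ^ 2) q]
  have h2 : ∀ i ∈ Finset.range q, (a ^ i + a ^ (q - i)) ^ 2
      = (a ^ 2) ^ i + 2 * a ^ q + (a ^ 2) ^ (q - i) := by
    intro i hi
    have hiq : i < q := Finset.mem_range.mp hi
    have e1 : (a ^ i) ^ 2 = (a ^ 2) ^ i := by rw [← pow_mul, ← pow_mul]; ring_nf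
    have e2 : (a ^ (q - i)) ^ 2 = (a ^ 2) ^ (q - i) := by rw [← pow_mul, ← pow_mul]; ring_nf
    have e3 : a ^ i * a ^ (q - i) = a ^ q := by
      rw [← pow_add]; congr 1; omega
    rw [add_sq, e1, e2, mul_assoc, e3]
  rw [Finset.sum_congr rfl h2]
  rw [Finset.sum_add_distrib, Finset.sum_add_distrib]
  have h3 : ∑ _i ∈ Finset.range q, 2 * a ^ q = q * (2 * a ^ q) := by
    rw [Finset.sum_const, Finset.card_range, nsmul_eq_mul]
  have h4 : ∑ i ∈ Finset.range q, (a ^ 2) ^ (q - i)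
      = (∑ i ∈ Finset.range q, (a ^ 2) ^ i) * a ^ 2 := by
    rw [← Finset.sum_range_reflect (fun j => (a ^ 2) ^ (q - j)) q]
    rw [Finset.sum_mul]
    apply Finset.sum_congr rfl
    intro j hj
    have hjq : j < q := Finset.mem_range.mp hj
    have : q - (q - 1 - j) = j + 1 := by omega
    rw [this, pow_succ]
  rw [h3, h4]
  ring

theorem aux_fsLq_eq (s : ℝ) (hs : 0 < s) (q : ℕ) (hq : 0 < q) :
    fsLq lap s q
      = ((1 + Real.exp (-(2/s)) ^ 2) * (∑ i ∈ Finset.range q, (Real.exp (-(2/s)) ^ 2) ^ i)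
          + 2 * q * Real.exp (-(2/s)) ^ q)
        * ((1 - Real.exp (-(2/s)) ^ q)⁻¹) ^ 2 := by
  set a := Real.exp (-(2/s)) with ha
  have ha0 : 0 < a := Real.exp_pos _
  have ha1 : a < 1 := by
    rw [ha]
    apply Real.exp_lt_one_iff.mpr
    have : (0:ℝ) < 2 / s := by positivity
    linarith
  set G : Fin q → ℤ → ℝ := fun z w => a ^ ((z : ℤ) + (q : ℤ) * w).natAbs with hGdef
  set T : Fin q → ℝ := fun z => (a ^ (z : ℕ) + a ^ (q - (z : ℕ))) * (1 - a ^ q)⁻¹ with hTdef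
  have hG : ∀ z : Fin q, HasSum (G z) (T z) := fun z =>
    aux_hasSum_int a ha0 ha1 q z z.isLt
  have hGnn : ∀ z w, 0 ≤ G z w := fun z w => pow_nonneg ha0.le _
  have hprod : ∀ z : Fin q, Summable (fun w : ℤ × ℤ => G z w.1 * G z w.2) := by
    intro z
    rw [summable_prod_of_nonneg (fun w => mul_nonneg (hGnn z w.1) (hGnn z w.2))]
    constructor
    · intro x
      show Summable fun y : ℤ => G z x * G z y
      exact ((hG z).summable).mul_left _
    · have he : (fun x : ℤ => ∑' y : ℤ, G z (x, y).1 * G z (x, y).2)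
          = fun x : ℤ => G z x * T z := by
        funext x
        simp only
        rw [tsum_mul_left, (hG z).tsum_eq]
      rw [he]
      exact ((hG z).summable).mul_right _
  have hz2 : ∀ z : Fin q, HasSum (fun w : ℤ × ℤ => G z w.1 * G z w.2) (T z * T z) :=
    fun z => (hG z).mul (hG z) (hprod z)
  -- rewrite fsLq as a sum over Fin q × ℤ × ℤ
  have hbij := latmap_bij q hq
  set e : (Fin q × ℤ × ℤ) ≃ LqSet q := Equiv.ofBijective _ hbij with hedef
  have hstep1 : fsLq lap s q
      = ∑' p : Fin q × ℤ × ℤ, G p.1 p.2.1 * G p.1 p.2.2 := by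
    rw [fsLq, ← e.tsum_eq]
    apply tsum_congr
    intro p
    obtain ⟨z, w₁, w₂⟩ := p
    have hco : (e (z, w₁, w₂) : ℝ × ℝ) = latmap q (z, w₁, w₂) := rfl
    rw [hco]
    have hc1 : (latmap q (z, w₁, w₂)).1 = (((z : ℤ) + (q : ℤ) * w₁ : ℤ) : ℝ) := by
      simp only [latmap]; push_cast; ring
    have hc2 : (latmap q (z, w₁, w₂)).2 = (((z : ℤ) + (q : ℤ) * w₂ : ℤ) : ℝ) := by
      simp only [latmap]; push_cast; ring
    rw [hc1, hc2, aux_lap_int s hs, aux_lap_int s hs]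
  have hF : Summable (fun p : Fin q × ℤ × ℤ => G p.1 p.2.1 * G p.1 p.2.2) := by
    rw [summable_prod_of_nonneg
      (f := fun p : Fin q × ℤ × ℤ => G p.1 p.2.1 * G p.1 p.2.2)
      (fun p => mul_nonneg (hGnn p.1 p.2.1) (hGnn p.1 p.2.2))]
    refine ⟨fun z => ?_, (hasSum_fintype _).summable⟩
    show Summable fun w : ℤ × ℤ => G z w.1 * G z w.2
    exact (hz2 z).summable
  have hstep2 : (∑' p : Fin q × ℤ × ℤ, G p.1 p.2.1 * G p.1 p.2.2)
      = ∑ z : Fin q, T z * T z := by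
    rw [Summable.tsum_prod' hF (fun z => (hz2 z).summable)]
    rw [tsum_fintype]
    refine Finset.sum_congr rfl fun z _ => ?_
    have : (∑' w : ℤ × ℤ, G z w.1 * G z w.2) = T z * T z := (hz2 z).tsum_eq
    exact this
  have hstep3 : (∑ z : Fin q, T z * T z) = ∑ z : Fin q, (T z) ^ 2 := by
    exact Finset.sum_congr rfl fun z _ => (sq (T z)).symm
  rw [hstep1, hstep2, hstep3, hTdef]
  exact aux_sum_sq a q hq

theorem aux_tanh (t : ℝ) :
    Real.tanh t = (1 - Real.exp (-t) ^ 2) / (1 + Real.exp (-t) ^ 2) := by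
  rw [Real.tanh_eq_sinh_div_cosh, Real.sinh_eq, Real.cosh_eq]
  have hb0 : 0 < Real.exp (-t) := Real.exp_pos _
  have hc : Real.exp t = (Real.exp (-t))⁻¹ := by
    rw [← Real.exp_neg, neg_neg]
  set b := Real.exp (-t)
  have h1 : b⁻¹ + b ≠ 0 := by positivity
  have h2 : (1:ℝ) + b ^ 2 ≠ 0 := by positivity
  rw [hc]
  rw [div_div_div_eq]
  field_simp

theorem aux_El (x : ℝ) (hx : 0 < x) :
    El x = (1 - Real.exp (-x) ^ 2) ^ 2
      / ((1 - (Real.exp (-x) ^ 2) ^ 2) + 4 * x * Real.exp (-x) ^ 2) := by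
  have hb0 : 0 < Real.exp (-x) := Real.exp_pos _
  have hb1 : Real.exp (-x) < 1 := by
    apply Real.exp_lt_one_iff.mpr; linarith
  have hc : Real.exp x = (Real.exp (-x))⁻¹ := by
    rw [← Real.exp_neg, neg_neg]
  have hX : Real.exp (2 * x) = ((Real.exp (-x))⁻¹) ^ 2 := by
    rw [two_mul, Real.exp_add, hc]; ring
  set b := Real.exp (-x)
  have hb2 : b ^ 2 < 1 := by nlinarith
  have hb2' : (1:ℝ) - b ^ 2 ≠ 0 := by nlinarith
  have hbinv : 1 < b⁻¹ := by
    rw [lt_inv_comm₀] <;> simp [hb0, hb1]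
  have hinv1 : b⁻¹ - b ≠ 0 := by nlinarith
  have hinv2 : b⁻¹ ^ 2 - 1 ≠ 0 := by nlinarith
  have hinv1 : b⁻¹ - b ≠ 0 := sub_ne_zero.mpr (ne_of_gt (hb1.trans hbinv))
  have hcoth : coth' x = (1 + b ^ 2) / (1 - b ^ 2) := by
    rw [coth', hc, div_eq_div_iff hinv1 hb2']
    field_simp
    ring
  have hsq1 : (b⁻¹ ^ 2 - 1) ^ 2 ≠ 0 := pow_ne_zero 2 (sub_ne_zero.mpr (ne_of_gt (by nlinarith)))
  have hsq2 : ((1:ℝ) - b ^ 2) ^ 2 ≠ 0 := pow_ne_zero 2 hb2'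
  have hterm : 4 * x * Real.exp (2 * x) / (Real.exp (2 * x) - 1) ^ 2
      = 4 * x * b ^ 2 / (1 - b ^ 2) ^ 2 := by
    rw [hX, div_eq_div_iff hsq1 hsq2]
    field_simp
  have hbody : coth' x + 4 * x * Real.exp (2 * x) / (Real.exp (2 * x) - 1) ^ 2
      = ((1 - (b ^ 2) ^ 2) + 4 * x * b ^ 2) / (1 - b ^ 2) ^ 2 := by
    rw [hcoth, hterm]
    field_simp
    ring
  rw [El, hbody, inv_div]

theorem aux_sinh_lt' (t : ℝ) (ht : 0 < t) : Real.sinh t < t * Real.cosh t := aux_sinh_lt t ht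

theorem aux_key (s : ℝ) (hs : 0 < s) :
    s * (1 - Real.exp (-(2/s)) ^ 2) < 2 * (1 + Real.exp (-(2/s)) ^ 2) := by
  have ht : 0 < 2 / s := by positivity
  have h := aux_sinh_lt (2/s) ht
  rw [Real.sinh_eq, Real.cosh_eq] at h
  have ha0 : 0 < Real.exp (-(2/s)) := Real.exp_pos _
  have hEa : Real.exp (2/s) * Real.exp (-(2/s)) = 1 := by
    rw [← Real.exp_add]; simp
  set a := Real.exp (-(2/s))
  set E := Real.exp (2/s)
  have h1 : E - a < (2/s) * (E + a) := by linarith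
  have h2 : s * (E - a) < s * ((2/s) * (E + a)) := by
    exact mul_lt_mul_of_pos_left h1 hs
  have h3 : s * ((2/s) * (E + a)) = 2 * (E + a) := by
    field_simp
  have h4 : s * (E - a) < 2 * (E + a) := by linarith
  have h5 : a * (s * (E - a)) < a * (2 * (E + a)) := mul_lt_mul_of_pos_left h4 ha0
  nlinarith [h5, hEa]

/-- Laplacian bound on `f_s(L_q)`: `1/f_s(L_q) > tanh(2/s)·E(q/s)`. -/
theorem laplacian_bound_Lq (s : ℝ) (hs : 0 < s) (q : ℕ) (hq : 0 < q) :
    1 / fsLq lap s q > Real.tanh (2 / s) * El (q / s) := by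
  have ha0 : 0 < Real.exp (-(2/s)) := Real.exp_pos _
  have ha1 : Real.exp (-(2/s)) < 1 := by
    apply Real.exp_lt_one_iff.mpr
    have : (0:ℝ) < 2 / s := by positivity
    linarith
  have key := aux_key s hs
  rw [aux_fsLq_eq s hs q hq]
  set a := Real.exp (-(2/s)) with ha
  set A := a ^ q with hA
  set Sg := ∑ i ∈ Finset.range q, (a ^ 2) ^ i with hSg
  have hA0 : 0 < A := pow_pos ha0 q
  have hA1 : A < 1 := pow_lt_one₀ ha0.le ha1 hq.ne'
  have hq0 : (0:ℝ) < (q:ℝ) := by exact_mod_cast hq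
  -- geometric sum identity
  have hSg' : Sg * (1 - a ^ 2) = 1 - A ^ 2 := by
    have h := geom_sum_mul (a ^ 2) q
    have hpow : (a ^ 2) ^ q = A ^ 2 := by
      rw [hA, ← pow_mul, ← pow_mul, Nat.mul_comm]
    rw [hpow] at h
    linear_combination -h
  have hSgpos : 0 < Sg := by
    apply Finset.sum_pos
    · intro i _; positivity
    · exact Finset.nonempty_range_iff.mpr hq.ne'
  set N := (1 + a ^ 2) * Sg + 2 * (q:ℝ) * A with hN
  have hN0 : 0 < N := by
    have h1 : 0 < (1 + a ^ 2) * Sg := mul_pos (by positivity) hSgpos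
    have h2 : 0 ≤ 2 * (q:ℝ) * A := by positivity
    linarith
  set D := (1 - A ^ 2) + 4 * ((q:ℝ)/s) * A with hD
  have hD0 : 0 < D := by
    have h1 : A ^ 2 < 1 := by nlinarith
    have h2 : 0 < 4 * ((q:ℝ)/s) * A := by positivity
    rw [hD]; linarith
  -- rewrite tanh and El
  have htanh : Real.tanh (2/s) = (1 - a ^ 2) / (1 + a ^ 2) := aux_tanh (2/s)
  have hbridge : Real.exp (-((q:ℝ)/s)) ^ 2 = A := by
    rw [hA, ha, ← Real.exp_nat_mul, ← Real.exp_nat_mul]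
    congr 1
    push_cast
    ring
  have hEl : El ((q:ℝ)/s) = (1 - A) ^ 2 / D := by
    rw [aux_El ((q:ℝ)/s) (by positivity), hbridge]
  rw [htanh, hEl]
  -- the core inequality
  have hstep : (1 - a ^ 2) * N < (1 + a ^ 2) * D := by
    have h1 : (1 - a ^ 2) * N = (1 + a ^ 2) * (1 - A ^ 2) + 2 * (q:ℝ) * A * (1 - a ^ 2) := by
      rw [hN]; linear_combination (1 + a ^ 2) * hSg'
    have h2 : 2 * (q:ℝ) * A * (1 - a ^ 2) < 4 * ((q:ℝ)/s) * A * (1 + a ^ 2) := by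
      have hqA : 0 < 2 * (q:ℝ) * A / s := by positivity
      calc 2 * (q:ℝ) * A * (1 - a ^ 2) = (2 * (q:ℝ) * A / s) * (s * (1 - a ^ 2)) := by
            field_simp
          _ < (2 * (q:ℝ) * A / s) * (2 * (1 + a ^ 2)) := mul_lt_mul_of_pos_left key hqA
          _ = 4 * ((q:ℝ)/s) * A * (1 + a ^ 2) := by field_simp; ring
    have h3 : (1 + a ^ 2) * D = (1 + a ^ 2) * (1 - A ^ 2) + 4 * ((q:ℝ)/s) * A * (1 + a ^ 2) := by
      rw [hD]; ring
    rw [h1, h3]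
    linarith [h2]
  have h1A : (0:ℝ) < 1 - A := by linarith
  have hfeq : 1 / (N * ((1 - A)⁻¹) ^ 2) = (1 - A) ^ 2 / N := by
    rw [inv_pow, one_div, mul_inv, inv_inv]
    rw [div_eq_inv_mul]
  rw [gt_iff_lt, hfeq, div_mul_div_comm, div_lt_div_iff₀ (by positivity) hN0]
  nlinarith [mul_lt_mul_of_pos_left hstep (pow_pos h1A 2)]

end
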